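/- A ring R is unit-regular if and only if the full matrix ring M_n(R) is unit-regular, for every natural number n ≥ 1. -/

import Mathlib

/-- An element `x` of a ring is *strongly nil-clean* if `x = e + b` where `e` is an
idempotent, `b` is nilpotent, and `e` and `b` commute. -/
def IsStronglyNilClean {R : Type*} [Ring R] (x : R) : Prop :=
  ∃ e b : R, IsIdempotentElem e ∧ IsNilpotent b ∧ e * b = b * e ∧ x = e + b

/-- A ring `R` is *strongly unit nil-clean* if for every `x : R` there is a unit `u`
such that `u * x` is strongly nil-clean. -/
def StronglyUnitNilClean (R : Type*) [Ring R] : Prop :=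
  ∀ x : R, ∃ u : Rˣ, IsStronglyNilClean ((u : R) * x)

/-- A ring `R` is *unit-regular* if every `a : R` satisfies `a = a * u * a` for some unit `u`. -/
def UnitRegular (R : Type*) [Ring R] : Prop :=
  ∀ a : R, ∃ u : Rˣ, a = a * (u : R) * a

/-- A group is *locally finite* if every finitely generated subgroup is finite. -/
def LocallyFiniteGroup (G : Type*) [Group G] : Prop :=
  ∀ H : Subgroup G, H.FG → (H : Set G).Finite

/-- A subset `T` of a ring is *nilpotent* if there is `n ≥ 1` such that every product of
`n` elements of `T` is zero. -/
def IsNilpotentSubset {R : Type*} [Ring R] (T : Set R) : Prop :=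
  ∃ n : ℕ, 0 < n ∧ ∀ l : List R, (∀ a ∈ l, a ∈ T) → l.length = n → l.prod = 0

/-- A subset `S` of a ring is *locally nilpotent* if the non-unital subring generated by
any finite subset of `S` is nilpotent. -/
def IsLocallyNilpotentSet {R : Type*} [Ring R] (S : Set R) : Prop :=
  ∀ F : Finset R, (F : Set R) ⊆ S →
    IsNilpotentSubset ((NonUnitalSubring.closure (F : Set R) : Set R))

/-- A ring is *NI* if the set of nilpotent elements forms a two-sided ideal. -/
def IsNIRing (R : Type*) [Ring R] : Prop :=
  ∃ I : TwoSidedIdeal R, ∀ x : R, x ∈ I ↔ IsNilpotent x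

/-- A ring is *weakly 2-primal* if its set of nilpotent elements is a two-sided ideal
which is moreover locally nilpotent. -/
def Weakly2Primal (R : Type*) [Ring R] : Prop :=
  IsNIRing R ∧ IsLocallyNilpotentSet {x : R | IsNilpotent x}

section UnitRegularMatrixProof

open Matrix


variable {R : Type*} [Ring R]

def VNR (R : Type*) [Ring R] : Prop := ∀ a : R, ∃ x : R, a = a * x * a
def SR1 (R : Type*) [Ring R] : Prop := ∀ a b x : R, a * x + b = 1 → ∃ y : R, IsUnit (a + b * y)

theorem unitRegular_vnr (h : UnitRegular R) : VNR R := fun a => ⟨(h a).choose, (h a).choose_spec⟩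

theorem unitRegular_sr1 (h : UnitRegular R) : SR1 R := by
  intro a b x hab
  obtain ⟨u, hu⟩ := h a
  set f : R := (u : R) * a with hf
  have hff : f * f = f := by
    rw [hf]
    calc (u : R) * a * ((u:R) * a) = (u:R) * (a * (u:R) * a) := by noncomm_ring
    _ = (u:R) * a := by rw [← hu]
  set w : R := f * x * (u⁻¹ : Rˣ) * (1 - f) with hw
  have hw2 : w * w = 0 := by
    have h1 : (1 - f) * f = 0 := by rw [sub_mul, one_mul, hff, sub_self]
    calc w * w = f * x * (u⁻¹ : Rˣ) * ((1 - f) * f) * (x * (u⁻¹ : Rˣ) * (1 - f)) := by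
          rw [hw]; noncomm_ring
    _ = 0 := by rw [h1]; noncomm_ring
  have hv : IsUnit (1 - w) := by
    refine isUnit_iff_exists.2 ⟨1 + w, ?_, ?_⟩
    · rw [sub_mul, mul_add, mul_add, one_mul, mul_one, hw2]; noncomm_ring
    · rw [add_mul, mul_sub, mul_sub, one_mul, mul_one, hw2]; noncomm_ring
  refine ⟨(u⁻¹ : Rˣ) * (1 - f), ?_⟩
  have key : (u : R) * (a + b * ((u⁻¹ : Rˣ) * (1 - f))) = 1 - w := by
    have hb : b = 1 - a * x := by rw [← hab]; noncomm_ring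
    have hua : (u : R) * a = f := hf.symm
    rw [hb, hw, hf]
    have huu : (u : R) * (u⁻¹ : Rˣ) = 1 := u.mul_inv
    calc (u:R) * (a + (1 - a * x) * ((u⁻¹:Rˣ) * (1 - (u:R)*a)))
        = (u:R)*a + ((u:R) * (u⁻¹:Rˣ)) * (1 - (u:R)*a) - (u:R)*a*x*(u⁻¹:Rˣ)*(1 - (u:R)*a) := by
          noncomm_ring
    _ = (u:R)*a + (1 - (u:R)*a) - (u:R)*a*x*(u⁻¹:Rˣ)*(1 - (u:R)*a) := by rw [huu]; noncomm_ring
    _ = 1 - (u:R)*a*x*(u⁻¹:Rˣ)*(1 - (u:R)*a) := by noncomm_ring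
  have : a + b * ((u⁻¹ : Rˣ) * (1 - f)) = (u⁻¹ : Rˣ) * (1 - w) := by
    rw [← key, ← mul_assoc]
    simp
  rw [this]
  exact (u⁻¹.isUnit).mul hv

theorem vnr_sr1_unitRegular (hv : VNR R) (hs : SR1 R) : UnitRegular R := by
  intro a
  obtain ⟨x, hx⟩ := hv a
  obtain ⟨y, hy⟩ := hs x (1 - x * a) a (by noncomm_ring)
  obtain ⟨w, hw⟩ := hy
  refine ⟨w, ?_⟩
  have : a * (x + (1 - x * a) * y) * a = a := by
    have : a * (x + (1 - x*a) * y) * a = a * x * a + (a - a * x * a) * (y * a) := by noncomm_ring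
    rw [this, ← hx]; noncomm_ring
  rw [hw]; rw [this]

theorem vnr_vec (h : VNR R) : ∀ (n : ℕ) (x : Fin n → R),
    ∃ y : Fin n → R, ∀ i, x i * (∑ k, y k * x k) = x i := by
  intro n
  induction n with
  | zero => intro x; exact ⟨0, fun i => i.elim0⟩
  | succ n ih =>
    intro x
    set a : R := x 0 with ha
    obtain ⟨x', hx'⟩ := h a
    set a' : R := x' * a * x' with ha'
    have hana : a * a' * a = a := by
      rw [ha']
      calc a * (x' * a * x') * a = (a * x' * a) * (x' * a) := by noncomm_ring
      _ = a * (x' * a) := by rw [← hx']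
      _ = a * x' * a := by noncomm_ring
      _ = a := hx'.symm
    set p : R := a' * a with hp
    have hpp : p * p = p := by
      rw [hp]
      calc a' * a * (a' * a) = a' * (a * a' * a) := by noncomm_ring
      _ = a' * a := by rw [hana]
    have hap : a * p = a := by rw [hp, ← mul_assoc, hana]
    have hpaa : p * (a' * a) = p := by rw [← hp, hpp]
    obtain ⟨y'', hy''⟩ := ih (fun j => x j.succ * (1 - p))
    set s : R := ∑ k : Fin n, y'' k * x k.succ with hs
    have hsp : s * (1 - p) = ∑ k : Fin n, y'' k * (x k.succ * (1 - p)) := by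
      rw [hs, Finset.sum_mul]
      exact Finset.sum_congr rfl fun k _ => by noncomm_ring
    refine ⟨Fin.cons ((1 - (1 - p) * s) * (p * a')) (fun j => (1 - p) * y'' j), ?_⟩
    have ht : (∑ k : Fin (n+1), (Fin.cons ((1 - (1 - p) * s) * (p * a'))
        (fun j => (1 - p) * y'' j) : Fin (n+1) → R) k * x k) = p + (1 - p) * s * (1 - p) := by
      rw [Fin.sum_univ_succ]
      simp only [Fin.cons_zero, Fin.cons_succ]
      have h1 : (1 - (1 - p) * s) * (p * a') * x 0 = p - (1 - p) * s * p := by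
        have : p * a' * a = p := by rw [mul_assoc, hpaa]
        rw [← ha]
        calc (1 - (1 - p) * s) * (p * a') * a = (1 - (1-p)*s) * (p * a' * a) := by noncomm_ring
        _ = (1 - (1-p)*s) * p := by rw [this]
        _ = p - (1 - p) * s * p := by noncomm_ring
      have h2 : (∑ k : Fin n, (1 - p) * y'' k * x k.succ) = (1 - p) * s := by
        rw [hs, Finset.mul_sum]
        exact Finset.sum_congr rfl fun k _ => by noncomm_ring
      rw [h1, h2]
      noncomm_ring
    rw [ht]
    intro i
    induction i using Fin.cases with
    | zero =>
      have hap0 : a * (1 - p) = 0 := by rw [mul_sub, mul_one, hap, sub_self]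
      rw [← ha, mul_add, hap]
      calc a + a * ((1-p) * s * (1-p)) = a + (a * (1 - p)) * (s * (1-p)) := by noncomm_ring
      _ = a := by rw [hap0]; noncomm_ring
    | succ j =>
      have key : x j.succ * (1 - p) * (s * (1 - p)) = x j.succ * (1 - p) := by
        rw [hsp]
        exact hy'' j
      calc x j.succ * (p + (1-p) * s * (1-p))
          = x j.succ * p + x j.succ * (1 - p) * (s * (1 - p)) := by noncomm_ring
      _ = x j.succ * p + x j.succ * (1 - p) := by rw [key]
      _ = x j.succ := by noncomm_ring

open Matrix in
theorem vnr_matrix (h : VNR R) (n : ℕ) : VNR (Matrix (Fin n) (Fin n) R) := by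
  intro A
  have key : ∀ k : ℕ, ∃ G X : Matrix (Fin n) (Fin n) R, G * G = G ∧ G = A * X ∧
      ∀ (i j : Fin n), (j : ℕ) < k → (G * A) i j = A i j := by
    intro k
    induction k with
    | zero => exact ⟨0, 0, by simp, by simp, fun i j hj => absurd hj (Nat.not_lt_zero _)⟩
    | succ k ih =>
      obtain ⟨G, X, hGG, hGX, hcol⟩ := ih
      by_cases hk : k < n
      · set j₀ : Fin n := ⟨k, hk⟩ with hj₀
        set x : Fin n → R := fun i => A i j₀ with hx
        set c : Fin n → R := x - G *ᵥ x with hc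
        obtain ⟨y, hy⟩ := vnr_vec h n c
        set H : Matrix (Fin n) (Fin n) R := vecMulVec c y with hH
        set v : Fin n → R := Pi.single j₀ 1 - X *ᵥ x with hv
        have hcv : c = A *ᵥ v := by
          rw [hc, hv, mulVec_sub, mulVec_single, mulVec_mulVec, ← hGX, hx]
          congr 1
          ext i
          simp
        -- H = A * vecMulVec v y
        have hHA : H = A * vecMulVec v y := by
          rw [hH, hcv]
          ext i j
          rw [mul_apply, vecMulVec_apply, mulVec]
          simp only [vecMulVec_apply]
          rw [dotProduct, Finset.sum_mul]
          exact Finset.sum_congr rfl fun l _ => by rw [mul_assoc]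
        -- G * H = 0
        have hGc : G *ᵥ c = 0 := by
          rw [hc, mulVec_sub, mulVec_mulVec, hGG, sub_self]
        have hGH : G * H = 0 := by
          rw [hH]
          ext i j
          rw [mul_apply]
          simp only [vecMulVec_apply]
          have : ∀ l, G i l * (c l * y j) = (G i l * c l) * y j := fun l => by rw [mul_assoc]
          rw [Finset.sum_congr rfl fun l _ => this l, ← Finset.sum_mul]
          have : (∑ l, G i l * c l) = (G *ᵥ c) i := rfl
          rw [this, hGc]
          simp
        -- H * H = H
        have hsum : ∀ i j, (∑ l, (c i * y l) * (c l * y j)) = c i * (∑ l, y l * c l) * y j := by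
          intro i j
          rw [Finset.mul_sum, Finset.sum_mul]
          exact Finset.sum_congr rfl fun l _ => by noncomm_ring
        have hHH : H * H = H := by
          rw [hH]
          ext i j
          rw [mul_apply]
          simp only [vecMulVec_apply]
          rw [hsum i j, hy i]
        -- H *ᵥ c = c
        have hHc : H *ᵥ c = c := by
          ext i
          rw [hH, mulVec, dotProduct]
          simp only [vecMulVec_apply]
          have : ∀ l, c i * y l * c l = c i * (y l * c l) := fun l => by rw [mul_assoc]
          rw [Finset.sum_congr rfl fun l _ => this l, ← Finset.mul_sum, hy i]
        refine ⟨G + H - H * G, X + vecMulVec v y * (1 - G), ?_, ?_, ?_⟩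
        · have e1 : G * (H * G) = 0 := by rw [← mul_assoc, hGH, zero_mul]
          have e2 : H * (H * G) = H * G := by rw [← mul_assoc, hHH]
          have e3 : H * G * G = H * G := by rw [mul_assoc, hGG]
          have e4 : H * G * H = 0 := by rw [mul_assoc]; rw [hGH, mul_zero]
          have e5 : H * G * (H * G) = 0 := by rw [mul_assoc, ← mul_assoc G H G, hGH,
            zero_mul, mul_zero]
          calc (G + H - H * G) * (G + H - H * G)
              = G * G + G * H - G * (H * G) + (H * G + H * H - H * (H * G))
                - (H * G * G + H * G * H - H * G * (H * G)) := by noncomm_ring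
          _ = G + H - H * G := by rw [hGG, hGH, e1, e2, hHH, e3, e4, e5]; noncomm_ring
        · rw [hGX, hHA]; noncomm_ring
        · intro i j hj
          rcases Nat.lt_or_ge (j : ℕ) k with hjk | hjk
          · have col : ∀ i', (G * A) i' j = A i' j := fun i' => hcol i' j hjk
            have hHGA : (H * G * A) i j = (H * A) i j := by
              rw [mul_assoc, mul_apply, mul_apply]
              exact Finset.sum_congr rfl fun l _ => by rw [col l]
            have : ((G + H - H * G) * A) i j
                = (G * A) i j + (H * A) i j - (H * G * A) i j := by
              simp [add_mul, sub_mul, Matrix.sub_apply, Matrix.add_apply]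
            rw [this, hHGA, col i]
            exact add_sub_cancel_right _ _
          · have hjeq : j = j₀ := by
              apply Fin.ext
              simp only [hj₀]
              omega
            subst hjeq
            have hMA : ∀ (M : Matrix (Fin n) (Fin n) R), (M * A) i j₀ = (M *ᵥ x) i := by
              intro M
              rw [mul_apply, hx, mulVec, dotProduct]
            have step : ((G + H - H * G) * A) i j₀
                = (G * A) i j₀ + (H * A) i j₀ - (H * G * A) i j₀ := by
              simp [add_mul, sub_mul, Matrix.sub_apply, Matrix.add_apply]
            rw [step, hMA G, hMA H, hMA (H * G), ← mulVec_mulVec]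
            have e : H *ᵥ x - H *ᵥ (G *ᵥ x) = c := by
              rw [← mulVec_sub, ← hc, hHc]
            have e2 : (H *ᵥ x) i - (H *ᵥ (G *ᵥ x)) i = x i - (G *ᵥ x) i := by
              have := congrFun e i
              simp only [Pi.sub_apply] at this
              rw [this, hc]
              simp
            have hxA : x i = A i j₀ := rfl
            rw [add_sub_assoc, e2, ← hxA, add_sub_cancel]
      · refine ⟨G, X, hGG, hGX, fun i j hj => hcol i j ?_⟩
        have := j.2
        omega
  obtain ⟨G, X, hGG, hGX, hcol⟩ := key n
  have hGA : G * A = A := by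
    ext i j
    exact hcol i j j.2
  exact ⟨X, by rw [← hGX, hGA]⟩


/-- A matrix supported on column 0 with zero first row squares to zero, so `1 ± C` are units. -/
lemma sq_zero_unit {k : ℕ} (C : Matrix (Fin (k+1)) (Fin (k+1)) R)
    (h0 : ∀ j, C 0 j = 0) (hcol : ∀ (i : Fin (k+1)) (j : Fin k), C i j.succ = 0) :
    (1 + C) * (1 - C) = 1 ∧ (1 - C) * (1 + C) = 1 := by
  have hCC : C * C = 0 := by
    ext i j
    rw [mul_apply, Fin.sum_univ_succ, h0 j, mul_zero]
    simp [hcol]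
  constructor
  · rw [mul_sub, add_mul, add_mul, hCC]; noncomm_ring
  · rw [sub_mul, mul_add, mul_add, hCC]; noncomm_ring

theorem sr1_block (hs : SR1 R) (m : ℕ) :
    ∀ (k : ℕ) (A X : Matrix (Fin k) (Fin k) R) (B : Matrix (Fin k) (Fin m) R)
      (Y : Matrix (Fin m) (Fin k) R), A * X + B * Y = 1 →
      ∃ Z : Matrix (Fin m) (Fin k) R, IsUnit (A + B * Z) := by
  intro k
  induction k with
  | zero =>
    intro A X B Y h
    refine ⟨0, ?_⟩
    have : A + B * (0 : Matrix (Fin m) (Fin 0) R) = 1 := Subsingleton.elim _ _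
    rw [this]
    exact isUnit_one
  | succ k ih =>
    intro A X B Y h
    set r : R := (∑ l : Fin k, A 0 l.succ * X l.succ 0) + (∑ l : Fin m, B 0 l * Y l 0) with hr
    have h00 : A 0 0 * X 0 0 + r = 1 := by
      have := congrFun (congrFun h 0) 0
      rw [Matrix.add_apply, mul_apply, mul_apply, Matrix.one_apply_eq] at this
      rw [Fin.sum_univ_succ] at this
      rw [hr, ← add_assoc]
      exact this
    obtain ⟨t, hut⟩ := hs (A 0 0) r (X 0 0) h00
    obtain ⟨u, hu⟩ := hut
    -- the column operation matrices
    set N : Matrix (Fin (k+1)) (Fin (k+1)) R :=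
      fun i j => Fin.cases (Fin.cases 0 (fun i' => X i'.succ 0 * t) i) (fun _ => 0) j with hN
    set F : Matrix (Fin m) (Fin (k+1)) R :=
      fun i j => Fin.cases (Y i 0 * t) (fun _ => 0) j with hF
    have hN0 : ∀ j, N 0 j = 0 := by
      intro j; induction j using Fin.cases <;> simp [hN]
    have hNsucc : ∀ (i : Fin (k+1)) (j : Fin k), N i j.succ = 0 := by
      intro i j; simp [hN]
    have hNs0 : ∀ l : Fin k, N l.succ 0 = X l.succ 0 * t := by
      intro l; simp [hN]
    have hF0 : ∀ l : Fin m, F l 0 = Y l 0 * t := by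
      intro l; simp [hF]
    have hFs : ∀ (l : Fin m) (j : Fin k), F l j.succ = 0 := by
      intro l j; simp [hF]
    clear_value N F
    clear hN hF
    obtain ⟨hE1, hE2⟩ := sq_zero_unit N hN0 hNsucc
    set M : Matrix (Fin (k+1)) (Fin (k+1)) R := A * (1 + N) + B * F with hM
    clear_value M
    have hM00 : M 0 0 = (u : R) := by
      rw [hu, hM]
      rw [Matrix.add_apply, mul_apply, mul_apply, Fin.sum_univ_succ]
      have e0 : (1 + N) 0 0 = 1 := by
        rw [Matrix.add_apply, Matrix.one_apply_eq, hN0 0, add_zero]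
      have es : ∀ l : Fin k, (1 + N) l.succ 0 = X l.succ 0 * t := by
        intro l
        rw [Matrix.add_apply, Matrix.one_apply_ne (Fin.succ_ne_zero l), hNs0 l, zero_add]
      rw [e0, mul_one]
      have es' : (∑ l : Fin k, A 0 l.succ * (1 + N) l.succ 0)
          = (∑ l : Fin k, A 0 l.succ * X l.succ 0) * t := by
        rw [Finset.sum_mul]
        exact Finset.sum_congr rfl fun l _ => by rw [es l, ← mul_assoc]
      have ef : (∑ l : Fin m, B 0 l * F l 0) = (∑ l : Fin m, B 0 l * Y l 0) * t := by
        rw [Finset.sum_mul]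
        exact Finset.sum_congr rfl fun l _ => by rw [hF0 l, ← mul_assoc]
      rw [es', ef, hr]
      noncomm_ring
    -- the row clearing matrix
    set K : Matrix (Fin (k+1)) (Fin (k+1)) R :=
      fun i j => Fin.cases (Fin.cases 0 (fun i' => -(M i'.succ 0 * ((u⁻¹ : Rˣ) : R))) i)
        (fun _ => 0) j with hK
    have hK0 : ∀ j, K 0 j = 0 := by
      intro j; induction j using Fin.cases <;> simp [hK]
    have hKsucc : ∀ (i : Fin (k+1)) (j : Fin k), K i j.succ = 0 := by
      intro i j; simp [hK]
    have hKs0 : ∀ i' : Fin k, K i'.succ 0 = -(M i'.succ 0 * ((u⁻¹ : Rˣ) : R)) := by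
      intro i'; simp [hK]
    clear_value K
    clear hK
    obtain ⟨hU1, hU2⟩ := sq_zero_unit K hK0 hKsucc
    set A₂ : Matrix (Fin (k+1)) (Fin (k+1)) R := (1 + K) * M with hA₂
    set B₂ : Matrix (Fin (k+1)) (Fin m) R := (1 + K) * B with hB₂
    clear_value A₂ B₂
    have hKM : ∀ i j, (K * M) i j = K i 0 * M 0 j := by
      intro i j
      rw [mul_apply, Fin.sum_univ_succ]
      simp [hKsucc]
    have hA₂col : ∀ i' : Fin k, A₂ i'.succ 0 = 0 := by
      intro i'
      rw [hA₂, add_mul, one_mul, Matrix.add_apply, hKM, hM00]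
      rw [hKs0 i', neg_mul, mul_assoc, Units.inv_mul, mul_one, add_neg_cancel]
    have hA₂00 : A₂ 0 0 = (u : R) := by
      rw [hA₂, add_mul, one_mul, Matrix.add_apply, hKM, hK0 0, zero_mul, add_zero, hM00]
    -- the transported hypothesis
    set X₂ : Matrix (Fin (k+1)) (Fin (k+1)) R := (1 - N) * (X * (1 - K)) with hX₂
    set Y₂ : Matrix (Fin m) (Fin (k+1)) R := (Y - F * ((1 - N) * X)) * (1 - K) with hY₂
    clear_value X₂ Y₂
    have h₂ : A₂ * X₂ + B₂ * Y₂ = 1 := by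
      rw [hA₂, hB₂, hX₂, hY₂, hM]
      have e1 : (1 + N) * ((1 - N) * X) = X := by
        rw [← Matrix.mul_assoc, hE1, Matrix.one_mul]
      have e2 : (A * (1 + N) + B * F) * ((1 - N) * X)
          = A * X + B * (F * ((1 - N) * X)) := by
        rw [Matrix.add_mul, Matrix.mul_assoc, e1, Matrix.mul_assoc]
      have e3 : (A * (1 + N) + B * F) * ((1 - N) * X) + B * (Y - F * ((1 - N) * X))
          = A * X + B * Y := by
        rw [e2, Matrix.mul_sub]
        abel
      have s1 : (1 + K) * (A * (1 + N) + B * F) * ((1 - N) * (X * (1 - K)))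
          = (1 + K) * (((A * (1 + N) + B * F) * ((1 - N) * X)) * (1 - K)) := by
        rw [Matrix.mul_assoc (1 + K)]
        congr 1
        rw [← Matrix.mul_assoc ((1 : Matrix (Fin (k+1)) (Fin (k+1)) R) - N) X (1 - K),
          ← Matrix.mul_assoc]
      have s2 : (1 + K) * B * ((Y - F * ((1 - N) * X)) * (1 - K))
          = (1 + K) * ((B * (Y - F * ((1 - N) * X))) * (1 - K)) := by
        rw [Matrix.mul_assoc (1 + K), ← Matrix.mul_assoc B]
      rw [s1, s2, ← Matrix.mul_add, ← Matrix.add_mul, e3, h, Matrix.one_mul, hU1]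
    -- the minor problem
    set A₁ : Matrix (Fin k) (Fin k) R := fun i j => A₂ i.succ j.succ with hA₁
    set X₁ : Matrix (Fin k) (Fin k) R := fun i j => X₂ i.succ j.succ with hX₁
    set B₁ : Matrix (Fin k) (Fin m) R := fun i j => B₂ i.succ j with hB₁
    set Y₁ : Matrix (Fin m) (Fin k) R := fun i j => Y₂ i j.succ with hY₁
    have hA₁e : ∀ i j : Fin k, A₁ i j = A₂ i.succ j.succ := fun i j => rfl
    have hX₁e : ∀ i j : Fin k, X₁ i j = X₂ i.succ j.succ := fun i j => rfl
    have hB₁e : ∀ (i : Fin k) (j : Fin m), B₁ i j = B₂ i.succ j := fun i j => rfl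
    have hY₁e : ∀ (i : Fin m) (j : Fin k), Y₁ i j = Y₂ i j.succ := fun i j => rfl
    clear_value A₁ X₁ B₁ Y₁
    clear hA₁ hX₁ hB₁ hY₁
    have h₁ : A₁ * X₁ + B₁ * Y₁ = 1 := by
      ext i j
      have key := congrFun (congrFun h₂ i.succ) j.succ
      rw [Matrix.add_apply, mul_apply, mul_apply, Fin.sum_univ_succ, hA₂col i, zero_mul,
        zero_add] at key
      rw [Matrix.add_apply, mul_apply, mul_apply]
      have e1 : (1 : Matrix (Fin k) (Fin k) R) i j
          = (1 : Matrix (Fin (k+1)) (Fin (k+1)) R) i.succ j.succ := by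
        simp [Matrix.one_apply, Fin.succ_inj]
      rw [e1, ← key]
      congr 1
      · exact Finset.sum_congr rfl fun l _ => by rw [hA₁e, hX₁e]
      · exact Finset.sum_congr rfl fun l _ => by rw [hB₁e, hY₁e]
    obtain ⟨Z₁, hZ₁⟩ := ih A₁ X₁ B₁ Y₁ h₁
    obtain ⟨W₁, hDW, hWD⟩ := isUnit_iff_exists.1 hZ₁
    set D : Matrix (Fin k) (Fin k) R := A₁ + B₁ * Z₁ with hD
    clear_value D
    -- assembling the unit
    set Z₂ : Matrix (Fin m) (Fin (k+1)) R :=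
      fun i j => Fin.cases 0 (fun j' => Z₁ i j') j with hZ₂
    have hZ₂0 : ∀ l : Fin m, Z₂ l 0 = 0 := by intro l; simp [hZ₂]
    have hZ₂s : ∀ (l : Fin m) (j' : Fin k), Z₂ l j'.succ = Z₁ l j' := by
      intro l j'; simp [hZ₂]
    clear_value Z₂
    clear hZ₂
    set V : Matrix (Fin (k+1)) (Fin (k+1)) R := A₂ + B₂ * Z₂ with hV
    clear_value V
    have hBZ0 : ∀ i, (B₂ * Z₂) i 0 = 0 := by
      intro i
      rw [mul_apply]
      simp [hZ₂0]
    have hV00 : V 0 0 = (u : R) := by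
      rw [hV, Matrix.add_apply, hA₂00, hBZ0 0, add_zero]
    have hVs0 : ∀ i' : Fin k, V i'.succ 0 = 0 := by
      intro i'
      rw [hV, Matrix.add_apply, hA₂col i', hBZ0, add_zero]
    have hVss : ∀ i' j' : Fin k, V i'.succ j'.succ = D i' j' := by
      intro i' j'
      rw [hV, hD, Matrix.add_apply, Matrix.add_apply]
      have h2 : (B₂ * Z₂) i'.succ j'.succ = (B₁ * Z₁) i' j' := by
        rw [mul_apply, mul_apply]
        exact Finset.sum_congr rfl fun l _ => by rw [hZ₂s, hB₁e]
      rw [h2, hA₁e]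
    set W : Matrix (Fin (k+1)) (Fin (k+1)) R :=
      fun i j => Fin.cases
        (Fin.cases ((u⁻¹ : Rˣ) : R) (fun _ => 0) i)
        (fun j' => Fin.cases (-(((u⁻¹ : Rˣ) : R) * (∑ l : Fin k, V 0 l.succ * W₁ l j')))
          (fun i' => W₁ i' j') i) j with hW
    have hW00 : W 0 0 = ((u⁻¹ : Rˣ) : R) := by simp [hW]
    have hWs0 : ∀ i' : Fin k, W i'.succ 0 = 0 := by intro i'; simp [hW]
    have hW0s : ∀ j' : Fin k,
        W 0 j'.succ = -(((u⁻¹ : Rˣ) : R) * (∑ l : Fin k, V 0 l.succ * W₁ l j')) := by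
      intro j'; simp [hW]
    have hWss : ∀ i' j' : Fin k, W i'.succ j'.succ = W₁ i' j' := by
      intro i' j'; simp [hW]
    clear_value W
    clear hW
    have hVW : V * W = 1 := by
      ext i j
      rw [mul_apply, Fin.sum_univ_succ]
      induction i using Fin.cases with
      | zero =>
        induction j using Fin.cases with
        | zero =>
          rw [hV00, hW00, Matrix.one_apply_eq]
          have e : ∀ l : Fin k, V 0 l.succ * W l.succ 0 = 0 := by
            intro l; rw [hWs0 l, mul_zero]
          simp [e, Units.mul_inv]
        | succ j' =>
          rw [hV00, hW0s j']
          have e : ∀ l : Fin k, V 0 l.succ * W l.succ j'.succ = V 0 l.succ * W₁ l j' :=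
            fun l => by rw [hWss l j']
          rw [Finset.sum_congr rfl fun (l : Fin k) _ => e l]
          rw [mul_neg, ← mul_assoc, Units.mul_inv, one_mul,
            Matrix.one_apply_ne (Fin.succ_ne_zero j').symm]
          exact neg_add_cancel _
      | succ i' =>
        induction j using Fin.cases with
        | zero =>
          rw [hVs0 i', zero_mul, Matrix.one_apply_ne (Fin.succ_ne_zero i')]
          have e : ∀ l : Fin k, V i'.succ l.succ * W l.succ 0 = 0 := by
            intro l; rw [hWs0 l, mul_zero]
          simp [e]
        | succ j' =>
          rw [hVs0 i', zero_mul, zero_add]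
          have e0 : ∀ l : Fin k, V i'.succ l.succ * W l.succ j'.succ = D i' l * W₁ l j' :=
            fun l => by rw [hVss i' l, hWss l j']
          rw [Finset.sum_congr rfl fun (l : Fin k) _ => e0 l]
          have e := congrFun (congrFun hDW i') j'
          rw [mul_apply] at e
          rw [e]
          simp [Matrix.one_apply, Fin.succ_inj]
    have hWV : W * V = 1 := by
      ext i j
      rw [mul_apply, Fin.sum_univ_succ]
      induction i using Fin.cases with
      | zero =>
        induction j using Fin.cases with
        | zero =>
          rw [hV00, hW00, Matrix.one_apply_eq]
          have e : ∀ l : Fin k, W 0 l.succ * V l.succ 0 = 0 := by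
            intro l; rw [hVs0 l, mul_zero]
          simp [e, Units.inv_mul]
        | succ j' =>
          rw [hW00, Matrix.one_apply_ne (Fin.succ_ne_zero j').symm]
          have e : ∀ l : Fin k, W 0 l.succ * V l.succ j'.succ
              = -(((u⁻¹ : Rˣ) : R) * ((∑ l₂ : Fin k, V 0 l₂.succ * W₁ l₂ l) * D l j')) := by
            intro l
            rw [hW0s l, hVss l j', neg_mul, mul_assoc]
          rw [Finset.sum_congr rfl fun (l : Fin k) _ => e l]
          have e2 : (∑ l : Fin k, (∑ l₂ : Fin k, V 0 l₂.succ * W₁ l₂ l) * D l j')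
              = V 0 j'.succ := by
            have e3 : ∀ l : Fin k, (∑ l₂ : Fin k, V 0 l₂.succ * W₁ l₂ l) * D l j'
                = ∑ l₂ : Fin k, V 0 l₂.succ * (W₁ l₂ l * D l j') := by
              intro l
              rw [Finset.sum_mul]
              exact Finset.sum_congr rfl fun l₂ _ => by rw [mul_assoc]
            rw [Finset.sum_congr rfl fun l _ => e3 l, Finset.sum_comm]
            have e4 : ∀ l₂ : Fin k, (∑ l : Fin k, V 0 l₂.succ * (W₁ l₂ l * D l j'))
                = V 0 l₂.succ * ((W₁ * D) l₂ j') := by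
              intro l₂
              rw [← Finset.mul_sum, mul_apply]
            rw [Finset.sum_congr rfl fun l₂ _ => e4 l₂, hWD]
            simp [Matrix.one_apply, mul_ite, mul_one, mul_zero, Finset.sum_ite_eq']
          rw [Finset.sum_neg_distrib, ← Finset.mul_sum, e2]
          exact add_neg_cancel _
      | succ i' =>
        induction j using Fin.cases with
        | zero =>
          rw [hV00, hWs0 i', zero_mul, Matrix.one_apply_ne (Fin.succ_ne_zero i')]
          have e : ∀ l : Fin k, W i'.succ l.succ * V l.succ 0 = 0 := by
            intro l; rw [hVs0 l, mul_zero]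
          simp [e]
        | succ j' =>
          rw [hWs0 i', zero_mul, zero_add]
          have e0 : ∀ l : Fin k, W i'.succ l.succ * V l.succ j'.succ = W₁ i' l * D l j' :=
            fun l => by rw [hVss l j', hWss i' l]
          rw [Finset.sum_congr rfl fun (l : Fin k) _ => e0 l]
          have e := congrFun (congrFun hWD i') j'
          rw [mul_apply] at e
          rw [e]
          simp [Matrix.one_apply, Fin.succ_inj]
    -- final unwinding
    have hVunit : IsUnit V := isUnit_iff_exists.2 ⟨W, hVW, hWV⟩
    refine ⟨(F + Z₂) * (1 - N), ?_⟩
    have hVfact : V = (1 + K) * (A * (1 + N) + B * (F + Z₂)) := by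
      rw [hV, hA₂, hB₂, hM, Matrix.mul_assoc (1 + K) B Z₂, ← Matrix.mul_add]
      congr 1
      rw [Matrix.mul_add B, add_assoc]
    have key : A + B * ((F + Z₂) * (1 - N)) = ((1 - K) * V) * (1 - N) := by
      have q1 : (1 - K) * V = A * (1 + N) + B * (F + Z₂) := by
        rw [hVfact, ← Matrix.mul_assoc, hU2, Matrix.one_mul]
      have q3 : (A * (1 + N) + B * (F + Z₂)) * (1 - N)
          = A + B * ((F + Z₂) * (1 - N)) := by
        rw [Matrix.add_mul, Matrix.mul_assoc, hE1, Matrix.mul_one, Matrix.mul_assoc]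
      rw [q1, q3]
    rw [key]
    have hNunit : IsUnit (1 - N : Matrix (Fin (k+1)) (Fin (k+1)) R) :=
      isUnit_iff_exists.2 ⟨1 + N, hE2, hE1⟩
    have hKunit : IsUnit (1 - K : Matrix (Fin (k+1)) (Fin (k+1)) R) :=
      isUnit_iff_exists.2 ⟨1 + K, hU2, hU1⟩
    exact (hKunit.mul hVunit).mul hNunit

lemma corner_helper {S : Type*} [Ring S] (e v w : S) (he : e * e = e)
    (hv : (1 - e) * v = 1 - e) (hw : (1 - e) * w = 1 - e) (hvw : v * w = 1) :
    (e * v * e) * (e * w * e) = e := by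
  have h0 : (1 - e) * e = 0 := by rw [sub_mul, one_mul, he, sub_self]
  have hev : e * v = v - (1 - e) := by
    have : e * v = v - (1 - e) * v := by noncomm_ring
    rw [this, hv]
  have hew : e * w = w - (1 - e) := by
    have : e * w = w - (1 - e) * w := by noncomm_ring
    rw [this, hw]
  calc (e * v * e) * (e * w * e)
      = ((e * v) * e) * (((e * w) * e)) := by noncomm_ring
    _ = ((v - (1 - e)) * e) * ((w - (1 - e)) * e) := by rw [hev, hew]
    _ = (v * e - (1 - e) * e) * (w * e - (1 - e) * e) := by noncomm_ring
    _ = (v * e) * (w * e) := by rw [h0]; noncomm_ring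
    _ = v * ((e * w) * e) := by noncomm_ring
    _ = v * ((w - (1 - e)) * e) := by rw [hew]
    _ = (v * w) * e - v * ((1 - e) * e) := by noncomm_ring
    _ = e := by rw [hvw, h0, one_mul, mul_zero, sub_zero]

lemma corner_eq {n : ℕ} [NeZero n] (M : Matrix (Fin n) (Fin n) R) :
    Matrix.single (0 : Fin n) (0 : Fin n) (1 : R) * M * Matrix.single (0 : Fin n) (0 : Fin n) (1 : R)
      = Matrix.single (0 : Fin n) (0 : Fin n) (M 0 0) := by
  ext i j
  by_cases hj : j = 0
  · subst hj
    rw [mul_single_apply_same, mul_one]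
    by_cases hi : i = 0
    · subst hi
      rw [single_mul_apply_same, one_mul, single_apply_same]
    · rw [single_mul_apply_of_ne (h := hi),
        single_apply_of_ne (h := by tauto)]
  · rw [mul_single_apply_of_ne (hbj := hj),
      single_apply_of_ne (h := by tauto)]

theorem vnr_of_matrix {n : ℕ} [NeZero n] (h : VNR (Matrix (Fin n) (Fin n) R)) : VNR R := by
  intro a
  obtain ⟨Xm, hX⟩ := h (Matrix.single (0 : Fin n) (0 : Fin n) a)
  refine ⟨Xm 0 0, ?_⟩
  have := congrFun (congrFun hX 0) 0
  rwa [single_apply_same, mul_single_apply_same,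
    single_mul_apply_same] at this

theorem sr1_of_matrix {n : ℕ} [NeZero n] (h : SR1 (Matrix (Fin n) (Fin n) R)) : SR1 R := by
  intro a b x hab
  set E : Matrix (Fin n) (Fin n) R := Matrix.single (0 : Fin n) (0 : Fin n) (1 : R) with hE
  have hEE : E * E = E := by rw [hE, single_mul_single_same, one_mul]
  set A : Matrix (Fin n) (Fin n) R := Matrix.single (0 : Fin n) (0 : Fin n) a + (1 - E) with hA
  set X : Matrix (Fin n) (Fin n) R := Matrix.single (0 : Fin n) (0 : Fin n) x + (1 - E) with hX
  set B : Matrix (Fin n) (Fin n) R := Matrix.single (0 : Fin n) (0 : Fin n) b with hB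
  have hsE : ∀ c : R, Matrix.single (0 : Fin n) (0 : Fin n) c * E = Matrix.single (0 : Fin n) (0 : Fin n) c := by
    intro c; rw [hE, single_mul_single_same, mul_one]
  have hEs : ∀ c : R, E * Matrix.single (0 : Fin n) (0 : Fin n) c = Matrix.single (0 : Fin n) (0 : Fin n) c := by
    intro c; rw [hE, single_mul_single_same, one_mul]
  have hs1E : ∀ c : R, Matrix.single (0 : Fin n) (0 : Fin n) c * (1 - E) = 0 := by
    intro c; rw [mul_sub, mul_one, hsE, sub_self]
  have h1Es : ∀ c : R, (1 - E) * Matrix.single (0 : Fin n) (0 : Fin n) c = 0 := by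
    intro c; rw [sub_mul, one_mul, hEs, sub_self]
  have h1E1E : (1 - E) * (1 - E) = 1 - E := by
    rw [mul_sub, mul_one, sub_mul, one_mul, hEE]; noncomm_ring
  have hAX : A * X + B = 1 := by
    rw [hA, hX, hB]
    rw [add_mul, mul_add, mul_add, single_mul_single_same, hs1E, h1Es, h1E1E]
    have h2 : Matrix.single (0 : Fin n) (0 : Fin n) (a * x)
        + Matrix.single (0 : Fin n) (0 : Fin n) b = E := by
      rw [← Matrix.single_add, hab, hE]
    calc Matrix.single (0 : Fin n) (0 : Fin n) (a * x) + 0 + (0 + (1 - E))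
          + Matrix.single (0 : Fin n) (0 : Fin n) b
        = (Matrix.single (0 : Fin n) (0 : Fin n) (a * x)
            + Matrix.single (0 : Fin n) (0 : Fin n) b) + (1 - E) := by abel
      _ = E + (1 - E) := by rw [h2]
      _ = 1 := by abel
  obtain ⟨Ym, hYu⟩ := h A B X hAX
  set V : Matrix (Fin n) (Fin n) R := A + B * Ym with hV
  obtain ⟨Wm, hVW, hWV⟩ := isUnit_iff_exists.1 hYu
  have h1B : (1 - E) * B = 0 := by rw [hB, h1Es]
  have h1A : (1 - E) * A = 1 - E := by rw [hA, mul_add, h1Es, h1E1E, zero_add]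
  have h1V : (1 - E) * V = 1 - E := by
    rw [hV, mul_add, h1A, ← mul_assoc, h1B, zero_mul, add_zero]
  have h1W : (1 - E) * Wm = 1 - E := by
    calc (1 - E) * Wm = ((1 - E) * V) * Wm := by rw [h1V]
      _ = (1 - E) * (V * Wm) := by rw [mul_assoc]
      _ = 1 - E := by rw [hVW, mul_one]
  have c1 := corner_helper E V Wm hEE h1V h1W hVW
  have c2 := corner_helper E Wm V hEE h1W h1V hWV
  have hEVE : E * V * E = Matrix.single (0 : Fin n) (0 : Fin n) (V 0 0) := by
    rw [hE]; exact corner_eq V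
  have hEWE : E * Wm * E = Matrix.single (0 : Fin n) (0 : Fin n) (Wm 0 0) := by
    rw [hE]; exact corner_eq Wm
  have hV00 : V 0 0 = a + b * Ym 0 0 := by
    rw [hV, Matrix.add_apply, hA, Matrix.add_apply, single_apply_same]
    have h3 : ((1 : Matrix (Fin n) (Fin n) R) - E) 0 0 = 0 := by
      rw [Matrix.sub_apply, Matrix.one_apply_eq, hE, single_apply_same, sub_self]
    have h4 : (B * Ym) 0 0 = b * Ym 0 0 := by
      rw [hB, single_mul_apply_same]
    rw [h3, add_zero, h4]
  refine ⟨Ym 0 0, isUnit_iff_exists.2 ⟨Wm 0 0, ?_, ?_⟩⟩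
  · rw [hEVE, hEWE, single_mul_single_same, hE] at c1
    have e := congrFun (congrFun c1 0) 0
    rw [single_apply_same, single_apply_same] at e
    rw [← hV00]
    exact e
  · rw [hEVE, hEWE, single_mul_single_same, hE] at c2
    have e := congrFun (congrFun c2 0) 0
    rw [single_apply_same, single_apply_same] at e
    rw [← hV00]
    exact e

end UnitRegularMatrixProof

theorem unitRegular_iff_matrix (R : Type*) [Ring R] (n : ℕ) (hn : 1 ≤ n) :
    UnitRegular R ↔ UnitRegular (Matrix (Fin n) (Fin n) R) := by
  haveI : NeZero n := ⟨by omega⟩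
  constructor
  · intro h
    refine vnr_sr1_unitRegular (vnr_matrix (unitRegular_vnr h) n) ?_
    intro A B X hAX
    obtain ⟨Z, hZ⟩ := sr1_block (unitRegular_sr1 h) n n A X B 1
      (by rw [Matrix.mul_one]; exact hAX)
    exact ⟨Z, hZ⟩
  · intro h
    exact vnr_sr1_unitRegular (vnr_of_matrix (unitRegular_vnr h))
      (sr1_of_matrix (unitRegular_sr1 h))
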